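/- Let F be an IFS on a compact metric space that expands small distances with constants α > 1 and δ₀ > 0. Then F is an open IFS (each f_λ is an open map) if and only if there exists 0 < δ₁ < δ₀/2 such that for all λ ∈ Λ and x, y ∈ X, d(f_λ(x), y) < α·δ₁ implies B_{δ₁}(x) ∩ f_λ^{-1}({y}) ≠ ∅. -/
import Mathlib


open Metric Filter Topology

noncomputable section

/-- Forward composition along a symbol sequence: `F_{σ_n} = f_{λ_{n-1}} ∘ ⋯ ∘ f_{λ_0}`. -/
def fwdComp {X Λ : Type*} [TopologicalSpace X] (f : Λ → X ≃ₜ X) (σ : ℤ → Λ) : ℕ → X → X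
  | 0 => id
  | n + 1 => (f (σ (n : ℤ))) ∘ fwdComp f σ n

/-- Backward composition: `F_{σ_{-n}} = f_{λ_{-n}}⁻¹ ∘ ⋯ ∘ f_{λ_{-1}}⁻¹`. -/
def bwdComp {X Λ : Type*} [TopologicalSpace X] (f : Λ → X ≃ₜ X) (σ : ℤ → Λ) : ℕ → X → X
  | 0 => id
  | n + 1 => ((f (σ (-(n + 1 : ℕ) : ℤ))).symm : X → X) ∘ bwdComp f σ n

/-- `IFSComp f σ i = F_{σ_i}`. -/
def IFSComp {X Λ : Type*} [TopologicalSpace X] (f : Λ → X ≃ₜ X) (σ : ℤ → Λ) (i : ℤ) : X → X :=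
  if 0 ≤ i then fwdComp f σ i.toNat else bwdComp f σ (-i).toNat

/-- A two-sided δ-pseudo orbit along σ. -/
def IsPseudoOrbit {X Λ : Type*} [MetricSpace X] (f : Λ → X ≃ₜ X) (δ : ℝ) (x : ℤ → X)
    (σ : ℤ → Λ) : Prop :=
  ∀ i : ℤ, dist (f (σ i) (x i)) (x (i + 1)) < δ

/-- Expansivity with constant `e`. -/
def ExpansiveWith {X Λ : Type*} [MetricSpace X] (f : Λ → X ≃ₜ X) (e : ℝ) : Prop :=
  ∀ (σ : ℤ → Λ) (x y : X), (∀ i : ℤ, dist (IFSComp f σ i x) (IFSComp f σ i y) < e) → x = y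

/-- Strong expansivity with constant `e`. -/
def StronglyExpansiveWith {X Λ : Type*} [MetricSpace X] (f : Λ → X ≃ₜ X) (e : ℝ) : Prop :=
  ∀ (σ μ : ℤ → Λ) (x y : X), (∀ i : ℤ, dist (IFSComp f σ i x) (IFSComp f μ i y) < e) → x = y

/-- The shadowing property. -/
def HasShadowing {X Λ : Type*} [MetricSpace X] (f : Λ → X ≃ₜ X) : Prop :=
  ∀ ε > (0 : ℝ), ∃ δ > (0 : ℝ), ∀ (x : ℤ → X) (σ : ℤ → Λ), IsPseudoOrbit f δ x σ →
    ∃ (y : X) (τ : ℤ → Λ), ∀ i : ℤ, dist (IFSComp f τ i y) (x i) ≤ ε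

/-- The Lipschitz shadowing property. -/
def HasLipschitzShadowing {X Λ : Type*} [MetricSpace X] (f : Λ → X ≃ₜ X) : Prop :=
  ∃ L > (0 : ℝ), ∃ ε₀ > (0 : ℝ), ∀ ε : ℝ, 0 < ε → ε < ε₀ →
    ∀ (x : ℤ → X) (σ : ℤ → Λ), IsPseudoOrbit f ε x σ →
      ∃ (y : X) (τ : ℤ → Λ), ∀ i : ℤ, dist (IFSComp f τ i y) (x i) < L * ε

/-- The limit shadowing property with respect to a distance function `D`. -/
def HasLimitShadowingWith {X Λ : Type*} [TopologicalSpace X] (f : Λ → X ≃ₜ X)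
    (D : X → X → ℝ) : Prop :=
  ∀ (x : ℤ → X) (σ : ℤ → Λ),
    Tendsto (fun i : ℤ => D (f (σ i) (x i)) (x (i + 1))) atTop (nhds 0) →
    Tendsto (fun i : ℤ => D (f (σ i) (x i)) (x (i + 1))) atBot (nhds 0) →
    ∃ (y : X) (τ : ℤ → Λ),
      Tendsto (fun i : ℤ => D (x i) (IFSComp f τ i y)) atTop (nhds 0) ∧
      Tendsto (fun i : ℤ => D (x i) (IFSComp f τ i y)) atBot (nhds 0)

/-- The metric `d̃` on sequences. -/
def dTilde {X : Type*} [MetricSpace X] (x y : ℤ → X) : ℝ :=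
  ⨆ i : ℤ, dist (x i) (y i) / 2 ^ i.natAbs

/-- The continuous shadowing property. -/
def HasContinuousShadowing {X Λ : Type*} [MetricSpace X] (f : Λ → X ≃ₜ X) : Prop :=
  ∀ ε > (0 : ℝ), ∃ δ > (0 : ℝ),
    ∃ r : {p : (ℤ → X) × (ℤ → Λ) // IsPseudoOrbit f δ p.1 p.2} → X,
      (∀ p, ∀ i : ℤ, dist (IFSComp f p.val.2 i (r p)) (p.val.1 i) < ε) ∧
      (∀ p, ∀ α > (0 : ℝ), ∃ β > (0 : ℝ), ∀ q, dTilde p.val.1 q.val.1 < β →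
        dist (r p) (r q) < α)
/-- Forward composition for a family of plain maps. -/
def fwdCompN {X Λ : Type*} (f : Λ → X → X) (σ : ℕ → Λ) : ℕ → X → X
  | 0 => id
  | n + 1 => f (σ n) ∘ fwdCompN f σ n

/-- A two-sided δ-pseudo orbit for a family of plain maps. -/
def IsPseudoOrbitF {X Λ : Type*} [MetricSpace X] (f : Λ → X → X) (δ : ℝ) (x : ℤ → X)
    (σ : ℤ → Λ) : Prop :=
  ∀ i : ℤ, dist (f (σ i) (x i)) (x (i + 1)) < δ

/-- A two-sided true orbit for a family of plain maps. -/
def IsOrbitSeq {X Λ : Type*} (f : Λ → X → X) (y : ℤ → X) (τ : ℤ → Λ) : Prop :=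
  ∀ i : ℤ, y (i + 1) = f (τ i) (y i)

/-- Shadowing property, orbits given as sequences. -/
def HasShadowingF {X Λ : Type*} [MetricSpace X] (f : Λ → X → X) : Prop :=
  ∀ ε > (0 : ℝ), ∃ δ > (0 : ℝ), ∀ (x : ℤ → X) (σ : ℤ → Λ), IsPseudoOrbitF f δ x σ →
    ∃ (y : ℤ → X) (τ : ℤ → Λ), IsOrbitSeq f y τ ∧ ∀ i : ℤ, dist (x i) (y i) ≤ ε

/-- Lipschitz shadowing property, orbits given as sequences. -/
def HasLipschitzShadowingF {X Λ : Type*} [MetricSpace X] (f : Λ → X → X) : Prop :=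
  ∃ L > (0 : ℝ), ∃ ε₀ > (0 : ℝ), ∀ ε : ℝ, 0 < ε → ε < ε₀ →
    ∀ (x : ℤ → X) (σ : ℤ → Λ), IsPseudoOrbitF f ε x σ →
      ∃ (y : ℤ → X) (τ : ℤ → Λ), IsOrbitSeq f y τ ∧ ∀ i : ℤ, dist (x i) (y i) < L * ε

/-- For an IFS expanding small distances with constants α > 1, δ₀ > 0:
openness is equivalent to the δ₁-lifting property. -/
theorem stmt_3 {X Λ : Type*} [MetricSpace X] [CompactSpace X] [Finite Λ] [Nonempty Λ]
    (f : Λ → X → X) (hf : ∀ l, Continuous (f l)) (δ₀ α : ℝ) (hδ₀ : 0 < δ₀) (hα : 1 < α)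
    (hexp : ∀ (l : Λ) (x y : X), 0 < dist x y → dist x y < δ₀ →
      α * dist x y < dist (f l x) (f l y)) :
    (∀ l, IsOpenMap (f l)) ↔
      ∃ δ₁ : ℝ, 0 < δ₁ ∧ δ₁ < δ₀ / 2 ∧
        ∀ (l : Λ) (x : X) (y : X), dist (f l x) y < α * δ₁ →
          (Metric.ball x δ₁ ∩ f l ⁻¹' {y}).Nonempty := by
  have hα0 : (0:ℝ) < α := lt_trans one_pos hα
  constructor
  · intro hopen
    have key : ∀ l : Λ, ∃ δ > (0:ℝ), ∀ x y : X, dist (f l x) y < δ →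
        ∃ z, dist z x < δ₀/8 ∧ f l z = y := by
      intro l
      have hU : IsOpen {p : X × X | ∃ z, dist z p.1 < δ₀/8 ∧ f l z = p.2} := by
        rw [isOpen_iff_mem_nhds]
        rintro ⟨x, y⟩ ⟨z, hz, rfl⟩
        have hspos : 0 < (δ₀/8 - dist z x)/2 := by linarith
        set s := (δ₀/8 - dist z x)/2 with hs
        have hmem : Metric.ball x s ×ˢ (f l '' Metric.ball z s) ∈ nhds ((x, f l z) : X × X) := by
          apply prod_mem_nhds
          · exact Metric.ball_mem_nhds _ hspos
          · exact (hopen l _ Metric.isOpen_ball).mem_nhds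
              ⟨z, Metric.mem_ball_self hspos, rfl⟩
        apply Filter.mem_of_superset hmem
        rintro ⟨x', y'⟩ ⟨hx', ⟨z', hz', rfl⟩⟩
        refine ⟨z', ?_, rfl⟩
        have h1 : dist z' z < s := hz'
        have h2 : dist x' x < s := hx'
        have := dist_triangle z' z x
        have := dist_triangle4 z' z x x'
        calc dist z' x' ≤ dist z' z + dist z x + dist x x' := dist_triangle4 z' z x x'
          _ < s + dist z x + s := by
              have : dist x x' < s := by rwa [dist_comm]
              linarith
          _ ≤ δ₀/8 := by rw [hs]; linarith
      have hD : IsCompact (Set.range (fun x : X => ((x, f l x) : X × X))) :=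
        isCompact_range (continuous_id.prodMk (hf l))
      have hDU : Set.range (fun x : X => ((x, f l x) : X × X)) ⊆
          {p : X × X | ∃ z, dist z p.1 < δ₀/8 ∧ f l z = p.2} := by
        rintro p ⟨x₀, rfl⟩
        exact ⟨x₀, by simpa using (by linarith : (0:ℝ) < δ₀/8), rfl⟩
      obtain ⟨δ, hδpos, hδ⟩ := hD.exists_cthickening_subset_open hU hDU
      refine ⟨δ, hδpos, fun x y hxy => ?_⟩
      have hmem : ((x, y) : X × X) ∈
          Metric.cthickening δ (Set.range (fun x : X => ((x, f l x) : X × X))) := by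
        have hd : dist ((x, y) : X × X) (x, f l x) ≤ δ := by
          have : dist ((x, y) : X × X) (x, f l x) = dist y (f l x) := by
            simp [Prod.dist_eq, dist_nonneg]
          rw [this, dist_comm]
          exact le_of_lt hxy
        exact Metric.mem_cthickening_of_dist_le _ _ δ _ (Set.mem_range_self x) hd
      exact hδ hmem
    choose δf hδf hprop using key
    haveI := Fintype.ofFinite Λ
    have hne : (Finset.univ : Finset Λ).Nonempty := Finset.univ_nonempty
    set δ := Finset.univ.inf' hne δf with hδdef
    have hδpos : 0 < δ := by
      rw [hδdef, Finset.lt_inf'_iff]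
      exact fun l _ => hδf l
    have hδle : ∀ l : Λ, δ ≤ δf l := fun l => Finset.inf'_le _ (Finset.mem_univ l)
    refine ⟨min (δ/α) (δ₀/4), lt_min (by positivity) (by linarith), ?_, ?_⟩
    · calc min (δ/α) (δ₀/4) ≤ δ₀/4 := min_le_right _ _
        _ < δ₀/2 := by linarith
    · intro l x y hxy
      have h1 : dist (f l x) y < δf l := by
        have : α * min (δ/α) (δ₀/4) ≤ δ := by
          calc α * min (δ/α) (δ₀/4) ≤ α * (δ/α) :=
                mul_le_mul_of_nonneg_left (min_le_left _ _) (le_of_lt hα0)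
            _ = δ := by field_simp
        exact lt_of_lt_of_le hxy (le_trans this (hδle l))
      obtain ⟨z, hz1, hz2⟩ := hprop l x y h1
      refine ⟨z, ?_, hz2⟩
      rw [Metric.mem_ball]
      rcases eq_or_ne z x with rfl | hne'
      · simpa using lt_min (by positivity) (by linarith)
      · have hd0 : 0 < dist x z := by
          rw [dist_pos]; exact fun h => hne' h.symm
        have hdlt : dist x z < δ₀ := by
          rw [dist_comm]; linarith
        have := hexp l x z hd0 hdlt
        rw [hz2] at this
        have hlt : α * dist x z < α * min (δ/α) (δ₀/4) := lt_trans this hxy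
        rw [dist_comm]
        exact lt_of_mul_lt_mul_left hlt (le_of_lt hα0)
  · rintro ⟨δ₁, hδ₁pos, hδ₁lt, hlift⟩ l U hUopen
    rw [Metric.isOpen_iff]
    rintro y ⟨x, hxU, rfl⟩
    obtain ⟨r, hrpos, hr⟩ := Metric.isOpen_iff.mp hUopen x hxU
    set r' := min r δ₁ with hr'
    have hr'pos : 0 < r' := lt_min hrpos hδ₁pos
    refine ⟨α * r', by positivity, ?_⟩
    intro y' hy'
    rw [Metric.mem_ball] at hy'
    have h1 : dist (f l x) y' < α * δ₁ := by
      rw [dist_comm]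
      exact lt_of_lt_of_le hy'
        (mul_le_mul_of_nonneg_left (min_le_right _ _) (le_of_lt hα0))
    obtain ⟨z, hz1, hz2⟩ := hlift l x y' h1
    rw [Set.mem_preimage, Set.mem_singleton_iff] at hz2
    refine ⟨z, hr ?_, hz2⟩
    rw [Metric.mem_ball]
    rcases eq_or_ne z x with rfl | hne'
    · simpa using hrpos
    · have hd0 : 0 < dist x z := by
        rw [dist_pos]; exact fun h => hne' h.symm
      rw [Metric.mem_ball] at hz1
      have hdlt : dist x z < δ₀ := by
        rw [dist_comm]; linarith
      have hh := hexp l x z hd0 hdlt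
      rw [hz2] at hh
      have : α * dist x z < α * r' := by
        rw [dist_comm (f l x) y'] at hh
        exact lt_trans hh hy'
      have := lt_of_mul_lt_mul_left this (le_of_lt hα0)
      rw [dist_comm]
      exact lt_of_lt_of_le this (min_le_left _ _)
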